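/- Let N be a positive integer and μ, ε > 0 real. Let D₁, D₂, D₃ be pairwise commuting skew-symmetric real N×N matrices, 𝔻 := [[0, −D₃, D₂], [D₃, 0, −D₁], [−D₂, D₁, 0]] (3N×3N), 𝒟 := (1/√(με))·[[0, −𝔻], [𝔻, 0]] (6N×6N), and for k = 1, 2, 3 let B_k be the block-diagonal 3N×3N matrix with each diagonal block equal to D_k. Given H⁰, E⁰ ∈ ℝ^(3N), define (√μ·H^t, √ε·E^t) = exp(t𝒟)·(√μ·H⁰, √ε·E⁰). Then the discrete momenta are exactly conserved: for each k = 1, 2, 3 and all t ∈ ℝ, ⟨H^t, B_k E^t⟩ = ⟨H⁰, B_k E⁰⟩ and ⟨E^t, B_k H^t⟩ = ⟨E⁰, B_k H⁰⟩. -/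

import Mathlib

open Matrix

/-- A `3N × 3N` block matrix built from a `3 × 3` array of `N × N` blocks. -/
def blockMat3 {N : ℕ} {α : Type*} (A : Fin 3 → Fin 3 → Matrix (Fin N) (Fin N) α) :
    Matrix (Fin 3 × Fin N) (Fin 3 × Fin N) α :=
  Matrix.of fun p q => A p.1 q.1 p.2 q.2

/-- The `3N × 3N` block-diagonal matrix with each diagonal block equal to `D`. -/
def blockDiag3 {N : ℕ} {α : Type*} [Zero α] (D : Matrix (Fin N) (Fin N) α) :
    Matrix (Fin 3 × Fin N) (Fin 3 × Fin N) α :=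
  Matrix.of fun p q => if p.1 = q.1 then D p.2 q.2 else 0

lemma blockMat3_mul_blockDiag3 {N : ℕ} (A : Fin 3 → Fin 3 → Matrix (Fin N) (Fin N) ℝ)
    (D : Matrix (Fin N) (Fin N) ℝ) :
    blockMat3 A * blockDiag3 D = blockMat3 (fun i j => A i j * D) := by
  ext ⟨i, x⟩ ⟨j, y⟩
  simp [Matrix.mul_apply, blockMat3, blockDiag3, Fintype.sum_prod_type, mul_ite,
    Finset.sum_ite_eq, Finset.sum_ite_eq']

lemma blockDiag3_mul_blockMat3 {N : ℕ} (A : Fin 3 → Fin 3 → Matrix (Fin N) (Fin N) ℝ)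
    (D : Matrix (Fin N) (Fin N) ℝ) :
    blockDiag3 D * blockMat3 A = blockMat3 (fun i j => D * A i j) := by
  ext ⟨i, x⟩ ⟨j, y⟩
  simp [Matrix.mul_apply, blockMat3, blockDiag3, Fintype.sum_prod_type, ite_mul,
    Finset.sum_ite_eq, Finset.sum_ite_eq']

lemma blockMat3_transpose {N : ℕ} (A : Fin 3 → Fin 3 → Matrix (Fin N) (Fin N) ℝ) :
    (blockMat3 A)ᵀ = blockMat3 (fun i j => (A j i)ᵀ) := by
  ext ⟨i, x⟩ ⟨j, y⟩; rfl

lemma blockDiag3_transpose {N : ℕ} (D : Matrix (Fin N) (Fin N) ℝ) :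
    (blockDiag3 D)ᵀ = blockDiag3 Dᵀ := by
  ext ⟨i, x⟩ ⟨j, y⟩
  simp [blockDiag3, Matrix.transpose_apply, eq_comm]

lemma blockDiag3_neg {N : ℕ} (D : Matrix (Fin N) (Fin N) ℝ) :
    blockDiag3 (-D) = -blockDiag3 D := by
  ext ⟨i, x⟩ ⟨j, y⟩
  simp only [blockDiag3, Matrix.of_apply, Matrix.neg_apply]
  split <;> simp

/-- the fully discrete exponential scheme exactly conserves the discrete momenta ℳ₁ and ℳ₂: `⟨Hᵗ, B_k Eᵗ⟩` and `⟨Eᵗ, B_k Hᵗ⟩` are constant in `t` for each `k`. -/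
theorem discrete_momentum_conservation {N : ℕ} (hN : 0 < N) (μ ε : ℝ) (hμ : 0 < μ) (hε : 0 < ε)
    (D1 D2 D3 : Matrix (Fin N) (Fin N) ℝ)
    (h12 : D1 * D2 = D2 * D1) (h13 : D1 * D3 = D3 * D1) (h23 : D2 * D3 = D3 * D2)
    (hD1 : D1ᵀ = -D1) (hD2 : D2ᵀ = -D2) (hD3 : D3ᵀ = -D3)
    (𝔻 : Matrix (Fin 3 × Fin N) (Fin 3 × Fin N) ℝ)
    (h𝔻 : 𝔻 = blockMat3 ![![0, -D3, D2], ![D3, 0, -D1], ![-D2, D1, 0]])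
    (𝒟 : Matrix ((Fin 3 × Fin N) ⊕ (Fin 3 × Fin N)) ((Fin 3 × Fin N) ⊕ (Fin 3 × Fin N)) ℝ)
    (h𝒟 : 𝒟 = (Real.sqrt (μ * ε))⁻¹ • Matrix.fromBlocks 0 (-𝔻) 𝔻 0)
    (H E : ℝ → (Fin 3 × Fin N → ℝ))
    (hprop : ∀ t : ℝ,
      Sum.elim (fun i => Real.sqrt μ * H t i) (fun i => Real.sqrt ε * E t i) =
        (NormedSpace.exp (t • 𝒟)).mulVec
          (Sum.elim (fun i => Real.sqrt μ * H 0 i) (fun i => Real.sqrt ε * E 0 i)))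
    (B : Fin 3 → Matrix (Fin 3 × Fin N) (Fin 3 × Fin N) ℝ)
    (hB : ∀ k : Fin 3, B k = blockDiag3 (![D1, D2, D3] k)) :
    ∀ k : Fin 3, ∀ t : ℝ,
      (H t ⬝ᵥ (B k).mulVec (E t) = H 0 ⬝ᵥ (B k).mulVec (E 0)) ∧
      (E t ⬝ᵥ (B k).mulVec (H t) = E 0 ⬝ᵥ (B k).mulVec (H 0)) := by
  intro k t
  -- skewness of B k
  have hBskew : (B k)ᵀ = -(B k) := by
    rw [hB, blockDiag3_transpose, ← blockDiag3_neg]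
    refine congrArg blockDiag3 ?_
    fin_cases k <;> simp [hD1, hD2, hD3]
  -- 𝔻 is symmetric
  have h𝔻sym : 𝔻ᵀ = 𝔻 := by
    rw [h𝔻, blockMat3_transpose]
    refine congrArg blockMat3 ?_
    funext i j
    fin_cases i <;> fin_cases j <;> simp [hD1, hD2, hD3]
  -- B k commutes with 𝔻
  have hcommDB : 𝔻 * B k = B k * 𝔻 := by
    rw [h𝔻, hB, blockMat3_mul_blockDiag3, blockDiag3_mul_blockMat3]
    refine congrArg blockMat3 ?_
    funext i j
    fin_cases i <;> fin_cases j <;> fin_cases k <;>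
      simp [neg_mul, mul_neg, h12, h13, h23]
  -- the skew quadratic form matrix
  set M : Matrix ((Fin 3 × Fin N) ⊕ (Fin 3 × Fin N)) ((Fin 3 × Fin N) ⊕ (Fin 3 × Fin N)) ℝ :=
    Matrix.fromBlocks 0 (B k) (-(B k)) 0 with hM
  have h𝒟M : 𝒟 * M = M * 𝒟 := by
    rw [h𝒟, hM, Matrix.smul_mul, Matrix.mul_smul]
    congr 1
    simp [Matrix.fromBlocks_multiply, hcommDB]
  have h𝒟skew : 𝒟ᵀ = -𝒟 := by
    rw [h𝒟, Matrix.transpose_smul, Matrix.fromBlocks_transpose, ← smul_neg]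
    congr 1
    rw [Matrix.fromBlocks_neg]
    simp [h𝔻sym]
  have hconj : ∀ s : ℝ, (NormedSpace.exp (s • 𝒟))ᵀ * (M * NormedSpace.exp (s • 𝒟)) = M := by
    intro s
    have hcm : Commute (s • 𝒟) M := by
      unfold Commute SemiconjBy
      rw [Matrix.smul_mul, Matrix.mul_smul, h𝒟M]
    have hPM : NormedSpace.exp (s • 𝒟) * M = M * NormedSpace.exp (s • 𝒟) := hcm.exp_left
    have hPt : (NormedSpace.exp (s • 𝒟))ᵀ = NormedSpace.exp (-(s • 𝒟)) := by
      rw [← Matrix.exp_transpose, Matrix.transpose_smul, h𝒟skew, smul_neg]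
    have hPtP : (NormedSpace.exp (s • 𝒟))ᵀ * NormedSpace.exp (s • 𝒟) = 1 := by
      rw [hPt, ← Matrix.exp_add_of_commute _ _ ((Commute.refl (s • 𝒟)).neg_left),
        neg_add_cancel, NormedSpace.exp_zero]
    rw [← hPM, ← Matrix.mul_assoc, hPtP, Matrix.one_mul]
  -- the conserved quadratic form
  have key : ∀ s : ℝ,
      (Sum.elim (fun i => Real.sqrt μ * H s i) (fun i => Real.sqrt ε * E s i)) ⬝ᵥ
        M.mulVec (Sum.elim (fun i => Real.sqrt μ * H s i) (fun i => Real.sqrt ε * E s i)) =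
      (Sum.elim (fun i => Real.sqrt μ * H 0 i) (fun i => Real.sqrt ε * E 0 i)) ⬝ᵥ
        M.mulVec (Sum.elim (fun i => Real.sqrt μ * H 0 i) (fun i => Real.sqrt ε * E 0 i)) := by
    intro s
    set u0 := Sum.elim (fun i => Real.sqrt μ * H 0 i) (fun i => Real.sqrt ε * E 0 i) with hu0
    set P := NormedSpace.exp (s • 𝒟) with hPdef
    rw [hprop s, ← hPdef]
    calc (P.mulVec u0) ⬝ᵥ M.mulVec (P.mulVec u0)
        = (P.mulVec u0) ⬝ᵥ (M * P).mulVec u0 := by rw [Matrix.mulVec_mulVec]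
      _ = ((M * P).mulVec u0) ⬝ᵥ (P.mulVec u0) := dotProduct_comm _ _
      _ = (((M * P).mulVec u0) ᵥ* P) ⬝ᵥ u0 := Matrix.dotProduct_mulVec _ _ _
      _ = (Pᵀ.mulVec ((M * P).mulVec u0)) ⬝ᵥ u0 := by rw [Matrix.mulVec_transpose]
      _ = ((Pᵀ * (M * P)).mulVec u0) ⬝ᵥ u0 := by rw [Matrix.mulVec_mulVec]
      _ = (M.mulVec u0) ⬝ᵥ u0 := by rw [hconj s]
      _ = u0 ⬝ᵥ M.mulVec u0 := dotProduct_comm _ _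
  -- skewness of the bilinear form
  have hskew : ∀ v w : Fin 3 × Fin N → ℝ,
      v ⬝ᵥ (B k).mulVec w = -(w ⬝ᵥ (B k).mulVec v) := by
    intro v w
    rw [Matrix.dotProduct_mulVec, ← Matrix.mulVec_transpose, hBskew, Matrix.neg_mulVec,
      neg_dotProduct, dotProduct_comm]
  -- evaluate the quadratic form
  have hq : ∀ s : ℝ,
      (Sum.elim (fun i => Real.sqrt μ * H s i) (fun i => Real.sqrt ε * E s i)) ⬝ᵥ
        M.mulVec (Sum.elim (fun i => Real.sqrt μ * H s i) (fun i => Real.sqrt ε * E s i)) =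
      2 * (Real.sqrt μ * Real.sqrt ε) * (H s ⬝ᵥ (B k).mulVec (E s)) := by
    intro s
    have hx : (fun i => Real.sqrt μ * H s i) = Real.sqrt μ • H s := rfl
    have hy : (fun i => Real.sqrt ε * E s i) = Real.sqrt ε • E s := rfl
    rw [hx, hy, hM, Matrix.fromBlocks_mulVec, sumElim_dotProduct_sumElim]
    simp only [Sum.elim_comp_inl, Sum.elim_comp_inr, Matrix.mulVec_smul, Matrix.zero_mulVec,
      smul_zero, add_zero, zero_add, Matrix.neg_mulVec, smul_dotProduct,
      dotProduct_smul, dotProduct_neg, smul_eq_mul, smul_neg]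
    rw [hskew (E s) (H s)]
    ring
  have hab : (2 : ℝ) * (Real.sqrt μ * Real.sqrt ε) ≠ 0 := by positivity
  have h1 : H t ⬝ᵥ (B k).mulVec (E t) = H 0 ⬝ᵥ (B k).mulVec (E 0) := by
    have := key t
    rw [hq t, hq 0] at this
    exact mul_left_cancel₀ hab this
  exact ⟨h1, by rw [hskew (E t) (H t), hskew (E 0) (H 0), h1]⟩
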